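/- arXiv:2212.05119 — 2 statements merged into one kernel-verified Lean document; each statement's English description precedes it below -/
import Mathlib

section
/- (Rankin bound) For every n ≥ 1 and every angle φ with π/2 < φ ≤ π, the maximal number A(n,φ) of points on S^{n-1} with pairwise angular distance at least φ satisfies A(n,φ) ≤ (cos φ − 1)/cos φ. -/
open scoped RealInnerProductSpace

abbrev E (n : ℕ) := EuclideanSpace ℝ (Fin n)

/-- A(n,φ): the maximal number of points on the unit sphere S^{n-1} ⊂ ℝⁿ with pairwise
angular distance at least φ, i.e. pairwise inner products at most cos φ. -/
noncomputable def A (n : ℕ) (φ : ℝ) : ℕ :=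
  sSup {N : ℕ | ∃ X : Finset (E n), (∀ x ∈ X, ‖x‖ = 1) ∧
    (∀ x ∈ X, ∀ y ∈ X, x ≠ y → ⟪x, y⟫ ≤ Real.cos φ) ∧ X.card = N}

lemma key {n : ℕ} {c : ℝ} (hc : c < 0) (X : Finset (E n))
    (h1 : ∀ x ∈ X, ‖x‖ = 1)
    (h2 : ∀ x ∈ X, ∀ y ∈ X, x ≠ y → ⟪x, y⟫ ≤ c) :
    (X.card : ℝ) ≤ (c - 1) / c := by
  classical
  set N : ℝ := (X.card : ℝ) with hN
  have hbound : (0:ℝ) ≤ N * (1 + (N - 1) * c) := by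
    have h0 : (0:ℝ) ≤ ⟪∑ x ∈ X, x, ∑ x ∈ X, x⟫ := real_inner_self_nonneg
    have hexp : ⟪∑ x ∈ X, x, ∑ x ∈ X, x⟫ = ∑ x ∈ X, ∑ y ∈ X, ⟪x, y⟫ := by
      rw [sum_inner]; exact Finset.sum_congr rfl fun x _ => inner_sum _ _ _
    have hle : ∑ x ∈ X, ∑ y ∈ X, ⟪x, y⟫ ≤ N * (1 + (N - 1) * c) := by
      have : ∀ x ∈ X, ∑ y ∈ X, ⟪x, y⟫ ≤ 1 + (N - 1) * c := by
        intro x hx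
        have : ∑ y ∈ X, ⟪x, y⟫ = ⟪x, x⟫ + ∑ y ∈ X.erase x, ⟪x, y⟫ := by
          rw [Finset.add_sum_erase _ _ hx]
        rw [this, real_inner_self_eq_norm_sq, h1 x hx]
        have hsum : ∑ y ∈ X.erase x, ⟪x, y⟫ ≤ (X.card - 1 : ℝ) * c := by
          have := Finset.sum_le_card_nsmul (X.erase x) (fun y => ⟪x, y⟫) c
            (fun y hy => h2 x hx y (Finset.mem_of_mem_erase hy)
              (Ne.symm (Finset.ne_of_mem_erase hy)))
          rw [Finset.card_erase_of_mem hx] at this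
          simpa [nsmul_eq_mul, Nat.cast_sub (Finset.one_le_card.mpr ⟨x, hx⟩)] using this
        nlinarith [hsum]
      calc ∑ x ∈ X, ∑ y ∈ X, ⟪x, y⟫ ≤ ∑ x ∈ X, (1 + (N - 1) * c) :=
            Finset.sum_le_sum this
        _ = N * (1 + (N - 1) * c) := by rw [Finset.sum_const, nsmul_eq_mul]
    linarith [hexp ▸ h0]
  rcases eq_or_lt_of_le (Nat.cast_nonneg X.card : (0:ℝ) ≤ N) with h | h
  · rw [hN, ← h, div_nonneg_iff]; right; exact ⟨by linarith, hc.le⟩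
  · rw [le_div_iff_of_neg hc]
    have hN1 : (1:ℝ) ≤ N := by
      have : (1:ℕ) ≤ X.card := Nat.cast_pos.mp (by exact_mod_cast h)
      rw [hN]; exact_mod_cast this
    have h1c : 0 ≤ 1 + (N - 1) * c := by
      by_contra h'
      push_neg at h'
      nlinarith
    nlinarith

/-- Rankin bound: for every n ≥ 1 and π/2 < φ ≤ π, A(n,φ) ≤ (cos φ − 1)/cos φ. -/
theorem rankin_bound (n : ℕ) (hn : 1 ≤ n) (φ : ℝ) (hφ₁ : Real.pi / 2 < φ)
    (hφ₂ : φ ≤ Real.pi) :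
    (A n φ : ℝ) ≤ (Real.cos φ - 1) / Real.cos φ := by
  have hc : Real.cos φ < 0 :=
    Real.cos_neg_of_pi_div_two_lt_of_lt hφ₁ (by linarith [Real.pi_pos])
  have hnonneg : 0 ≤ (Real.cos φ - 1) / Real.cos φ :=
    div_nonneg_of_nonpos (by linarith) hc.le
  have hA : A n φ ≤ ⌊(Real.cos φ - 1) / Real.cos φ⌋₊ := by
    apply csSup_le
    · exact ⟨0, ∅, by simp⟩
    · rintro N ⟨X, h1, h2, rfl⟩
      exact Nat.le_floor (key hc X h1 h2)
  calc (A n φ : ℝ) ≤ (⌊(Real.cos φ - 1) / Real.cos φ⌋₊ : ℝ) := by exact_mod_cast hA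
    _ ≤ _ := Nat.floor_le hnonneg
end

section
/- The set of code points of spherical codes of dimension n lies below the curve R = (1/n)·log₂(min{n+1, (cos φ − 1)/cos φ}) in the large angle region: for every spherical code X ⊂ S^{n-1} with minimal angle φ_X ∈ (π/2, π], the rate R_X = (1/n)·log₂(#X) satisfies R_X ≤ (1/n)·log₂(min{n+1, (cos φ_X − 1)/cos φ_X}). -/
open scoped RealInnerProductSpace

lemma simplex_bound (n : ℕ) (X : Finset (E n))
    (hneg : ∀ x ∈ X, ∀ y ∈ X, x ≠ y → ⟪x, y⟫ < 0) :
    (X.card : ℝ) ≤ (n : ℝ) + 1 := by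
  classical
  rcases X.eq_empty_or_nonempty with rfl | ⟨x₀, hx₀⟩
  · simp; positivity
  · set Y : Finset (E n) := X.erase x₀ with hY
    have hmem : ∀ j : Y, (j : E n) ∈ X := fun j => Finset.mem_of_mem_erase j.2
    have hnex : ∀ j : Y, (j : E n) ≠ x₀ := fun j => Finset.ne_of_mem_erase j.2
    have hli : LinearIndependent ℝ (fun x => x : Y → E n) := by
      rw [Fintype.linearIndependent_iff]
      intro g hg i
      set P : Finset Y := Finset.univ.filter (fun j => 0 < g j) with hP
      set N : Finset Y := Finset.univ.filter (fun j => g j < 0) with hN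
      have hPpos : ∀ j ∈ P, 0 < g j := fun j hj => (Finset.mem_filter.mp hj).2
      have hNneg : ∀ j ∈ N, g j < 0 := fun j hj => (Finset.mem_filter.mp hj).2
      have hdisj : ∀ a ∈ P, ∀ b ∈ N, (a : E n) ≠ (b : E n) := by
        intro a ha b hb h
        have hab : a = b := Subtype.ext h
        subst hab
        exact absurd (hPpos a ha) (not_lt.mpr (le_of_lt (hNneg a hb)))
      set u : E n := ∑ j ∈ P, g j • (j : E n) with hu
      have hsplit : (∑ j : Y, g j • (j : E n)) = u + ∑ j ∈ N, g j • (j : E n) := by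
        rw [hu, ← Finset.sum_filter_add_sum_filter_not Finset.univ (fun j => 0 < g j)]
        congr 1
        rw [← Finset.sum_filter_add_sum_filter_not
          (Finset.univ.filter (fun j => ¬ 0 < g j)) (fun j => g j < 0)]
        have h1 : (Finset.univ.filter (fun j : Y => ¬ 0 < g j)).filter (fun j => g j < 0)
            = N := by
          rw [hN]; ext j
          simp only [Finset.mem_filter, Finset.mem_univ, true_and, not_lt]
          exact ⟨fun h => h.2, fun h => ⟨h.le, h⟩⟩
        have h2 : ∀ j ∈ (Finset.univ.filter (fun j : Y => ¬ 0 < g j)).filter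
            (fun j => ¬ g j < 0), g j • (j : E n) = 0 := by
          intro j hj
          simp only [Finset.mem_filter] at hj
          have : g j = 0 := le_antisymm (not_lt.mp hj.1.2) (not_lt.mp hj.2)
          simp [this]
        rw [h1, Finset.sum_eq_zero h2, add_zero]
      have hueq : u = ∑ j ∈ N, (- g j) • (j : E n) := by
        have h0 : u + ∑ j ∈ N, g j • (j : E n) = 0 := by rw [← hsplit]; exact hg
        have := eq_neg_of_add_eq_zero_left h0
        rw [this, ← Finset.sum_neg_distrib]
        exact Finset.sum_congr rfl (fun j _ => by rw [neg_smul])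
      have huu : ⟪u, u⟫ ≤ 0 := by
        conv_lhs => rw [real_inner_comm]
        nth_rewrite 1 [hueq]
        rw [hu, sum_inner]
        apply Finset.sum_nonpos
        intro j hj
        rw [inner_smul_left, inner_sum]
        rw [RCLike.conj_to_real]
        apply mul_nonpos_of_nonneg_of_nonpos (by linarith [hNneg j hj])
        apply Finset.sum_nonpos
        intro a ha
        rw [inner_smul_right]
        apply mul_nonpos_of_nonneg_of_nonpos (le_of_lt (hPpos a ha))
        exact le_of_lt (hneg _ (hmem j) _ (hmem a) (fun h => hdisj a ha j hj h.symm))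
      have hu0 : u = 0 := by
        have := real_inner_self_nonneg (x := u)
        have h2 : ⟪u, u⟫ = 0 := le_antisymm huu this
        exact inner_self_eq_zero.mp h2
      have hPempty : P = ∅ := by
        by_contra h
        have hne : P.Nonempty := Finset.nonempty_of_ne_empty h
        have hlt : ⟪u, x₀⟫ < 0 := by
          rw [hu, sum_inner]
          have h1 : ∀ j ∈ P, ⟪g j • (j : E n), x₀⟫ < 0 := by
            intro j hj
            rw [real_inner_smul_left]
            exact mul_neg_of_pos_of_neg (hPpos j hj) (hneg _ (hmem j) _ hx₀ (hnex j))
          calc ∑ j ∈ P, ⟪g j • (j : E n), x₀⟫ < ∑ _j ∈ P, (0:ℝ) :=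
                Finset.sum_lt_sum_of_nonempty hne h1
            _ = 0 := Finset.sum_const_zero
        rw [hu0] at hlt; simp at hlt
      have hNempty : N = ∅ := by
        by_contra h
        have hne : N.Nonempty := Finset.nonempty_of_ne_empty h
        have hlt : ⟪u, x₀⟫ < 0 := by
          rw [hueq, sum_inner]
          have h1 : ∀ j ∈ N, ⟪(- g j) • (j : E n), x₀⟫ < 0 := by
            intro j hj
            rw [real_inner_smul_left]
            exact mul_neg_of_pos_of_neg (by linarith [hNneg j hj])
              (hneg _ (hmem j) _ hx₀ (hnex j))
          calc ∑ j ∈ N, ⟪(- g j) • (j : E n), x₀⟫ < ∑ _j ∈ N, (0:ℝ) :=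
                Finset.sum_lt_sum_of_nonempty hne h1
            _ = 0 := Finset.sum_const_zero
        rw [hu0] at hlt; simp at hlt
      by_contra hgi
      rcases lt_trichotomy (g i) 0 with h | h | h
      · have : i ∈ N := Finset.mem_filter.mpr ⟨Finset.mem_univ i, h⟩
        rw [hNempty] at this; exact absurd this (Finset.notMem_empty i)
      · exact hgi h
      · have : i ∈ P := Finset.mem_filter.mpr ⟨Finset.mem_univ i, h⟩
        rw [hPempty] at this; exact absurd this (Finset.notMem_empty i)
    have hcard : Y.card ≤ n := by
      have := hli.finset_card_le_finrank
      rwa [finrank_euclideanSpace_fin] at this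
    have : X.card ≤ n + 1 := by
      have h3 : Y.card = X.card - 1 := by rw [hY]; exact Finset.card_erase_of_mem hx₀
      have h4 : 1 ≤ X.card := Finset.card_pos.mpr ⟨x₀, hx₀⟩
      omega
    exact_mod_cast this

lemma rankin_bound_s11 (n : ℕ) (X : Finset (E n)) (hne : X.Nonempty)
    (hunit : ∀ x ∈ X, ‖x‖ = 1) (c : ℝ) (hc : c < 0)
    (hsep : ∀ x ∈ X, ∀ y ∈ X, x ≠ y → ⟪x, y⟫ ≤ c) :
    (X.card : ℝ) ≤ (c - 1) / c := by
  classical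
  set m : ℝ := (X.card : ℝ) with hm
  have hm1 : (1:ℝ) ≤ m := by
    rw [hm]; exact_mod_cast Finset.card_pos.mpr hne
  have key : 0 ≤ m * (1 + (m - 1) * c) := by
    have h0 : (0:ℝ) ≤ ⟪∑ x ∈ X, x, ∑ x ∈ X, x⟫ := real_inner_self_nonneg
    rw [sum_inner] at h0
    have hb : ∀ x ∈ X, ⟪x, ∑ y ∈ X, y⟫ ≤ 1 + (m - 1) * c := by
      intro x hx
      rw [inner_sum, ← Finset.add_sum_erase X _ hx]
      have h1 : ⟪x, x⟫ = 1 := by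
        rw [real_inner_self_eq_norm_mul_norm, hunit x hx]; norm_num
      have h2 : ∑ y ∈ X.erase x, ⟪x, y⟫ ≤ (m - 1) * c := by
        have := Finset.sum_le_card_nsmul (X.erase x) (fun y => ⟪x, y⟫) c
          (fun y hy => hsep x hx y (Finset.mem_of_mem_erase hy)
            (Finset.ne_of_mem_erase hy).symm)
        rw [nsmul_eq_mul, Finset.card_erase_of_mem hx] at this
        have hcast : ((X.card - 1 : ℕ) : ℝ) = m - 1 := by
          have h4 : 1 ≤ X.card := Finset.card_pos.mpr hne
          rw [hm]; push_cast [h4]; ring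
        calc ∑ y ∈ X.erase x, ⟪x, y⟫ ≤ ((X.card - 1 : ℕ) : ℝ) * c := this
          _ = (m - 1) * c := by rw [hcast]
      linarith
    have := Finset.sum_le_card_nsmul X (fun x => ⟪x, ∑ y ∈ X, y⟫) (1 + (m - 1) * c) hb
    rw [nsmul_eq_mul] at this
    calc (0:ℝ) ≤ ∑ x ∈ X, ⟪x, ∑ y ∈ X, y⟫ := h0
      _ ≤ m * (1 + (m - 1) * c) := this
  rw [le_div_iff_of_neg hc]
  nlinarith [key, hm1, hc]


/-- In the large angle region π/2 < φ ≤ π, the code point of any spherical code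
X ⊂ S^{n-1} with minimal angle φ lies below the curve
R = (1/n)·log₂(min{n+1, (cos φ − 1)/cos φ}). -/
theorem large_angle_rate_bound (n : ℕ) (hn : 1 ≤ n) (X : Finset (E n)) (hne : X.Nonempty)
    (hunit : ∀ x ∈ X, ‖x‖ = 1) (φ : ℝ) (hφ₁ : Real.pi / 2 < φ) (hφ₂ : φ ≤ Real.pi)
    (hsep : ∀ x ∈ X, ∀ y ∈ X, x ≠ y → ⟪x, y⟫ ≤ Real.cos φ) :
    (1 / n : ℝ) * Real.logb 2 (X.card)
      ≤ (1 / n : ℝ) * Real.logb 2 (min ((n : ℝ) + 1) ((Real.cos φ - 1) / Real.cos φ)) := by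

  have hc : Real.cos φ < 0 := by
    rcases lt_or_eq_of_le hφ₂ with h | h
    · exact Real.cos_neg_of_pi_div_two_lt_of_lt hφ₁ (by linarith [Real.pi_pos])
    · rw [h, Real.cos_pi]; norm_num
  have hb1 : (X.card : ℝ) ≤ (n : ℝ) + 1 :=
    simplex_bound n X (fun x hx y hy hxy => lt_of_le_of_lt (hsep x hx y hy hxy) hc)
  have hb2 : (X.card : ℝ) ≤ (Real.cos φ - 1) / Real.cos φ :=
    rankin_bound_s11 n X hne hunit _ hc hsep
  have hmin : (X.card : ℝ) ≤ min ((n : ℝ) + 1) ((Real.cos φ - 1) / Real.cos φ) :=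
    le_min hb1 hb2
  have hpos : (0:ℝ) < X.card := by exact_mod_cast Finset.card_pos.mpr hne
  have hlog : Real.logb 2 (X.card) ≤
      Real.logb 2 (min ((n : ℝ) + 1) ((Real.cos φ - 1) / Real.cos φ)) :=
    Real.logb_le_logb_of_le (by norm_num) hpos hmin
  apply mul_le_mul_of_nonneg_left hlog
  positivity
end
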